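/- Let d ≥ 1 and let Ω ⊆ ℝ^d be a nonempty bounded open set. Then there exists a constant C > 0 such that for every u ∈ C_c^∞(ℝ^d; ℝ) one has ∫_{ℝ^d} (|u(x)|² + |∇u(x)|²) dx ≤ C ( ∫_{ℝ^d} |∇u(x)|² dx + ∫_{Ω^c} |u(x)|² dx ), where Ω^c denotes the complement of Ω. -/

import Mathlib

open MeasureTheory Set Metric

noncomputable section

set_option maxHeartbeats 1000000

abbrev Euc (d : ℕ) := EuclideanSpace ℝ (Fin d)

/-- A real-valued test function on `ℝ^d`: smooth and compactly supported. -/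
def IsTest {d : ℕ} (φ : Euc d → ℝ) : Prop :=
  ContDiff ℝ (⊤ : ℕ∞) φ ∧ HasCompactSupport φ

lemma sq_setIntegral_le {L : ℝ} (hL : 0 < L) {h : ℝ → ℝ} (hc : Continuous h)
    (hcs : HasCompactSupport h) :
    (∫ t in Ioc (0:ℝ) L, h t) ^ 2 ≤ L * ∫ t in Ioc (0:ℝ) L, h t ^ 2 := by
  have hmem : MemLp h 2 (volume.restrict (Ioc (0:ℝ) L)) :=
    (hc.memLp_of_hasCompactSupport hcs).restrict _
  have h22 : Real.HolderConjugate 2 2 := Real.HolderConjugate.two_two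
  have hCS := integral_mul_le_Lp_mul_Lq_of_nonneg (μ := volume.restrict (Ioc (0:ℝ) L)) h22
    (f := fun t => |h t|) (g := fun _ => (1:ℝ))
    (Filter.Eventually.of_forall fun t => abs_nonneg _)
    (Filter.Eventually.of_forall fun _ => zero_le_one)
    (by rw [ENNReal.ofReal_ofNat]; exact hmem.abs) (by norm_num; exact memLp_const 1)
  have habs : |∫ t in Ioc (0:ℝ) L, h t| ≤ ∫ t in Ioc (0:ℝ) L, |h t| := by
    simpa using norm_integral_le_integral_norm (μ := volume.restrict (Ioc 0 L)) h
  have h1 : (∫ _t in Ioc (0:ℝ) L, (1:ℝ) ^ (2:ℝ)) = L := by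
    simp [Real.volume_Ioc, ENNReal.toReal_ofReal hL.le, hL.le]
  have h2 : (∫ t in Ioc (0:ℝ) L, |h t| ^ (2:ℝ)) = ∫ t in Ioc (0:ℝ) L, h t ^ 2 := by
    refine integral_congr_ae (Filter.Eventually.of_forall fun t => ?_)
    show |h t| ^ ((2:ℕ):ℝ) = h t ^ 2
    rw [Real.rpow_natCast, sq_abs]
  rw [h1, h2] at hCS
  have hkey : ∫ t in Ioc (0:ℝ) L, |h t| ≤
      (∫ t in Ioc (0:ℝ) L, h t ^ 2) ^ ((1:ℝ)/2) * L ^ ((1:ℝ)/2) := by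
    simpa using hCS
  have hsqnn : (0:ℝ) ≤ ∫ t in Ioc (0:ℝ) L, h t ^ 2 :=
    integral_nonneg fun t => sq_nonneg _
  have hhelp : ∀ x : ℝ, 0 ≤ x → (x ^ ((1:ℝ)/2)) ^ 2 = x := fun x hx => by
    rw [← Real.rpow_natCast (x ^ ((1:ℝ)/2)) 2, ← Real.rpow_mul hx]; norm_num
  calc (∫ t in Ioc (0:ℝ) L, h t) ^ 2 = |∫ t in Ioc (0:ℝ) L, h t| ^ 2 := (sq_abs _).symm
    _ ≤ (∫ t in Ioc (0:ℝ) L, |h t|) ^ 2 :=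
        pow_le_pow_left₀ (abs_nonneg _) habs 2
    _ ≤ ((∫ t in Ioc (0:ℝ) L, h t ^ 2) ^ ((1:ℝ)/2) * L ^ ((1:ℝ)/2)) ^ 2 :=
        pow_le_pow_left₀ (integral_nonneg fun t => abs_nonneg _) hkey 2
    _ = L * ∫ t in Ioc (0:ℝ) L, h t ^ 2 := by
        rw [mul_pow, hhelp _ hsqnn, hhelp _ hL.le, mul_comm]

lemma pointwise_bound {d : ℕ} (hd : 1 ≤ d) {R : ℝ} (hR : 0 < R) {v : Euc d → ℝ}
    (hv : ContDiff ℝ (⊤:ℕ∞) v) (hsupp : tsupport v ⊆ closedBall 0 R) (x : Euc d)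
    (hx : x ∈ closedBall (0 : Euc d) R) :
    v x ^ 2 ≤ (2*R+1) * ∫ t in Ioc (0:ℝ) (2*R+1),
      ‖fderiv ℝ v (x + t • (EuclideanSpace.single (⟨0, hd⟩ : Fin d) (1:ℝ)))‖ ^ 2 := by
  set e : Euc d := EuclideanSpace.single (⟨0, hd⟩ : Fin d) (1:ℝ) with he
  have hne : ‖e‖ = 1 := by simp [he]
  set L : ℝ := 2*R+1 with hLdef
  have hL : 0 < L := by positivity
  have hxR : ‖x‖ ≤ R := by simpa using mem_closedBall_iff_norm.1 hx
  have hDcont : Continuous (fderiv ℝ v) := hv.continuous_fderiv (by simp)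
  set g : ℝ → ℝ := fun t => v (x + t • e) with hg
  set G : ℝ → ℝ := fun t => (fderiv ℝ v (x + t • e)) e with hG
  -- lower bound on the norm of x + t • e
  have hlow : ∀ t : ℝ, ‖t • e‖ - ‖x‖ ≤ ‖x + t • e‖ := by
    intro t
    have h1 : ‖t • e‖ ≤ ‖x + t • e‖ + ‖x‖ := by
      calc ‖t • e‖ = ‖(x + t • e) - x‖ := by rw [add_sub_cancel_left]
        _ ≤ ‖x + t • e‖ + ‖x‖ := norm_sub_le _ _
    linarith
  have hnorm_smul : ∀ t : ℝ, ‖t • e‖ = |t| := fun t => by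
    rw [norm_smul, hne, mul_one, Real.norm_eq_abs]
  -- if the derivative is nonzero at x + t • e then |t| is bounded
  have hS : ∀ t : ℝ, fderiv ℝ v (x + t • e) ≠ 0 → |t| ≤ ‖x‖ + R := by
    intro t hcon
    have hmem : x + t • e ∈ tsupport v := support_fderiv_subset ℝ hcon
    have hb : ‖x + t • e‖ ≤ R := by simpa using mem_closedBall_iff_norm.1 (hsupp hmem)
    have := hlow t
    rw [hnorm_smul t] at this
    linarith
  have hline : ∀ t : ℝ, HasDerivAt (fun s : ℝ => x + s • e) e t := fun t => by
    simpa using ((hasDerivAt_id t).smul_const e).const_add x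
  have hgderiv : ∀ t : ℝ, HasDerivAt g (G t) t := fun t =>
    ((hv.differentiable (by simp) (x + t • e)).hasFDerivAt).comp_hasDerivAt t (hline t)
  have hGcont : Continuous G :=
    (hDcont.comp (continuous_const.add (continuous_id.smul continuous_const))).clm_apply continuous_const
  have hGzero : ∀ t : ℝ, L ≤ t → G t = 0 := by
    intro t ht
    have : fderiv ℝ v (x + t • e) = 0 := by
      by_contra hcon
      have h2 := hS t hcon
      have h3 : t ≤ |t| := le_abs_self t
      linarith
    simp [hG, this]
  have hGsupp : HasCompactSupport G := by
    apply HasCompactSupport.of_support_subset_isCompact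
      (isCompact_Icc (a := -(‖x‖+R)) (b := ‖x‖+R))
    intro t ht
    simp only [Function.mem_support] at ht
    have : fderiv ℝ v (x + t • e) ≠ 0 := fun hzero => ht (by simp [hG, hzero])
    have := hS t this
    exact abs_le.1 this |> fun ⟨a, b⟩ => ⟨by linarith, b⟩
  have hGint : IntegrableOn G (Ioi (0:ℝ)) :=
    (hGcont.integrable_of_hasCompactSupport hGsupp).integrableOn
  have hgt : Filter.Tendsto g Filter.atTop (nhds 0) := by
    apply Filter.Tendsto.congr' _ tendsto_const_nhds
    filter_upwards [Filter.eventually_ge_atTop (‖x‖ + R + 1)] with t ht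
    have hnot : x + t • e ∉ tsupport v := by
      intro hmem
      have hb : ‖x + t • e‖ ≤ R := by simpa using mem_closedBall_iff_norm.1 (hsupp hmem)
      have := hlow t
      rw [hnorm_smul t] at this
      have : t ≤ |t| := le_abs_self t
      have hxnn : (0:ℝ) ≤ ‖x‖ := norm_nonneg x
      have := hlow t
      rw [hnorm_smul t] at this
      have h4 : |t| ≤ ‖x‖ + R := by linarith
      have h5 : t ≤ ‖x‖ + R := le_trans (le_abs_self t) h4
      linarith
    exact (image_eq_zero_of_notMem_tsupport hnot).symm
  have hFTC : ∫ t in Ioi (0:ℝ), G t = 0 - g 0 :=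
    integral_Ioi_of_hasDerivAt_of_tendsto' (fun t _ => hgderiv t) hGint hgt
  have hzero : ∫ t in Ioi L, G t = 0 :=
    setIntegral_eq_zero_of_forall_eq_zero fun t ht => hGzero t (le_of_lt ht)
  have hsplit : ∫ t in Ioi (0:ℝ), G t = ∫ t in Ioc (0:ℝ) L, G t := by
    rw [← Ioc_union_Ioi_eq_Ioi hL.le,
      setIntegral_union (Ioc_disjoint_Ioi le_rfl) measurableSet_Ioi
        ((hGcont.integrable_of_hasCompactSupport hGsupp).integrableOn)
        ((hGcont.integrable_of_hasCompactSupport hGsupp).integrableOn),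
      hzero, add_zero]
  have hvx : v x = -∫ t in Ioc (0:ℝ) L, G t := by
    have h0 : g 0 = v x := by simp [hg]
    rw [← hsplit, hFTC]; simp [h0]
  -- compact support of the norm-squared integrand
  have hDsupp : HasCompactSupport (fun t : ℝ => ‖fderiv ℝ v (x + t • e)‖ ^ 2) := by
    apply HasCompactSupport.of_support_subset_isCompact
      (isCompact_Icc (a := -(‖x‖+R)) (b := ‖x‖+R))
    intro t ht
    simp only [Function.mem_support] at ht
    have : fderiv ℝ v (x + t • e) ≠ 0 := by
      intro hzero; exact ht (by simp [hzero])
    have := hS t this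
    exact abs_le.1 this |> fun ⟨a, b⟩ => ⟨by linarith, b⟩
  have hDcont2 : Continuous (fun t : ℝ => ‖fderiv ℝ v (x + t • e)‖ ^ 2) :=
    ((hDcont.comp (continuous_const.add (continuous_id.smul continuous_const))).norm).pow 2
  have hG2supp : HasCompactSupport (fun t : ℝ => G t ^ 2) := by
    have : (fun t : ℝ => G t ^ 2) = (fun t : ℝ => G t * G t) := by funext t; ring
    rw [this]; exact hGsupp.mul_right
  calc v x ^ 2 = (∫ t in Ioc (0:ℝ) L, G t) ^ 2 := by rw [hvx]; ring
    _ ≤ L * ∫ t in Ioc (0:ℝ) L, G t ^ 2 := sq_setIntegral_le hL hGcont hGsupp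
    _ ≤ L * ∫ t in Ioc (0:ℝ) L, ‖fderiv ℝ v (x + t • e)‖ ^ 2 := by
        apply mul_le_mul_of_nonneg_left _ hL.le
        apply setIntegral_mono_on
        · exact ((hGcont.pow 2).integrable_of_hasCompactSupport hG2supp).integrableOn
        · exact (hDcont2.integrable_of_hasCompactSupport hDsupp).integrableOn
        · exact measurableSet_Ioc
        · intro t _
          have hle := (fderiv ℝ v (x + t • e)).le_opNorm e
          rw [hne, mul_one] at hle
          calc G t ^ 2 = |G t| ^ 2 := (sq_abs _).symm
            _ ≤ ‖fderiv ℝ v (x + t • e)‖ ^ 2 := by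
                apply pow_le_pow_left₀ (abs_nonneg _) _ 2
                simpa [Real.norm_eq_abs] using hle

lemma poincare_ball {d : ℕ} (hd : 1 ≤ d) {R : ℝ} (hR : 0 < R) {v : Euc d → ℝ}
    (hv : ContDiff ℝ (⊤:ℕ∞) v) (hsupp : tsupport v ⊆ closedBall 0 R) :
    ∫ x, v x ^ 2 ≤ (2*R+1)^2 * ∫ x, ‖fderiv ℝ v x‖ ^ 2 := by
  set e : Euc d := EuclideanSpace.single (⟨0, hd⟩ : Fin d) (1:ℝ) with he
  set L : ℝ := 2*R+1 with hLdef
  have hL : 0 < L := by positivity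
  set B : Set (Euc d) := closedBall 0 R with hB
  have hvcs : HasCompactSupport v :=
    IsCompact.of_isClosed_subset (isCompact_closedBall _ _) (isClosed_tsupport v) hsupp
  have hDcont : Continuous (fderiv ℝ v) := hv.continuous_fderiv (by simp)
  have hDcs : HasCompactSupport (fderiv ℝ v) := hvcs.fderiv (𝕜 := ℝ)
  have hDint : Integrable (fun x : Euc d => ‖fderiv ℝ v x‖ ^ 2) :=
    (hDcont.norm.pow 2).integrable_of_hasCompactSupport
      (show HasCompactSupport (fun x : Euc d => ‖fderiv ℝ v x‖ ^ 2) from hDcs.comp_left (g := fun y : (Euc d →L[ℝ] ℝ) => ‖y‖^2) (by simp))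
  set W : Euc d × ℝ → ℝ := fun p => ‖fderiv ℝ v (p.1 + p.2 • e)‖ ^ 2 with hW
  have hWcont : Continuous W :=
    ((hDcont.comp (continuous_fst.add (continuous_snd.smul continuous_const))).norm).pow 2
  have hWint : IntegrableOn W (B ×ˢ Ioc (0:ℝ) L) := by
    apply IntegrableOn.mono_set
      (hWcont.continuousOn.integrableOn_compact ((isCompact_closedBall _ _).prod isCompact_Icc))
    exact prod_mono_right Ioc_subset_Icc_self
  set ν : Measure (Euc d × ℝ) := (volume.restrict B).prod (volume.restrict (Ioc (0:ℝ) L)) with hν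
  have hWνint : Integrable W ν := by
    rw [hν, Measure.prod_restrict, ← Measure.volume_eq_prod]
    exact hWint
  have hv2cs : HasCompactSupport (fun x : Euc d => v x ^ 2) :=
    hvcs.comp_left (g := fun y : ℝ => y ^ 2) (by simp)
  have hv2int : Integrable (fun x : Euc d => v x ^ 2) :=
    ((hv.continuous.pow 2)).integrable_of_hasCompactSupport hv2cs
  have step1 : ∫ x, v x ^ 2 = ∫ x in B, v x ^ 2 := by
    refine (setIntegral_eq_integral_of_forall_compl_eq_zero fun x hx => ?_).symm
    have : v x = 0 := image_eq_zero_of_notMem_tsupport fun hm => hx (hsupp hm)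
    simp [this]
  have step2 : ∫ x in B, v x ^ 2 ≤ ∫ x in B, (L * ∫ t in Ioc (0:ℝ) L, W (x, t)) := by
    apply setIntegral_mono_on hv2int.integrableOn
      (hWνint.integral_prod_left.const_mul L) measurableSet_closedBall
    intro x hx
    exact pointwise_bound hd hR hv hsupp x hx
  have step3 : ∫ x in B, (L * ∫ t in Ioc (0:ℝ) L, W (x, t)) =
      L * ∫ t in Ioc (0:ℝ) L, ∫ x in B, W (x, t) := by
    simp_rw [← smul_eq_mul (a := L), integral_smul]
    rw [integral_integral_swap hWνint]
  have step4 : ∀ t : ℝ, (∫ x in B, W (x, t)) ≤ ∫ x, ‖fderiv ℝ v x‖ ^ 2 := by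
    intro t
    have htcs : HasCompactSupport (fun x : Euc d => fderiv ℝ v (x + t • e)) :=
      hDcs.comp_homeomorph (Homeomorph.addRight (t • e))
    have hc : HasCompactSupport (fun x : Euc d => ‖fderiv ℝ v (x + t • e)‖ ^ 2) := by
      have := htcs.comp_left (g := fun y : (Euc d →L[ℝ] ℝ) => ‖y‖^2) (by simp)
      exact this
    have htint : Integrable (fun x : Euc d => ‖fderiv ℝ v (x + t • e)‖ ^ 2) :=
      ((hDcont.comp (continuous_id.add continuous_const)).norm.pow 2)
        |>.integrable_of_hasCompactSupport hc
    calc (∫ x in B, W (x, t)) ≤ ∫ x, ‖fderiv ℝ v (x + t • e)‖ ^ 2 :=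
          setIntegral_le_integral htint (Filter.Eventually.of_forall fun x => by positivity)
      _ = ∫ x, ‖fderiv ℝ v x‖ ^ 2 :=
          integral_add_right_eq_self (fun x : Euc d => ‖fderiv ℝ v x‖ ^ 2) (t • e)
  have step5 : ∫ t in Ioc (0:ℝ) L, ∫ x in B, W (x, t) ≤ L * ∫ x, ‖fderiv ℝ v x‖ ^ 2 := by
    have hconst : (∫ _t in Ioc (0:ℝ) L, (∫ x, ‖fderiv ℝ v x‖ ^ 2)) =
        L * ∫ x, ‖fderiv ℝ v x‖ ^ 2 := by
      rw [setIntegral_const]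
      simp [Real.volume_Ioc, ENNReal.toReal_ofReal hL.le, smul_eq_mul, hL.le]
    rw [← hconst]
    apply setIntegral_mono_on hWνint.integral_prod_right
      (integrableOn_const (by rw [Real.volume_Ioc]; exact ENNReal.ofReal_ne_top))
      measurableSet_Ioc
    intro t _
    exact step4 t
  calc ∫ x, v x ^ 2 = ∫ x in B, v x ^ 2 := step1
    _ ≤ ∫ x in B, (L * ∫ t in Ioc (0:ℝ) L, W (x, t)) := step2
    _ = L * ∫ t in Ioc (0:ℝ) L, ∫ x in B, W (x, t) := step3
    _ ≤ L * (L * ∫ x, ‖fderiv ℝ v x‖ ^ 2) := mul_le_mul_of_nonneg_left step5 hL.le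
    _ = (2*R+1)^2 * ∫ x, ‖fderiv ℝ v x‖ ^ 2 := by rw [hLdef]; ring

/-- Poincaré-type inequality: for a nonempty bounded open set `Ω ⊆ ℝ^d`, the full `H¹` norm of a
compactly supported smooth function is controlled by the gradient term together with the `L²` norm
on the complement of `Ω`. -/
theorem statement0 (d : ℕ) (hd : 1 ≤ d) (Ω : Set (Euc d)) (hΩo : IsOpen Ω)
    (hΩb : Bornology.IsBounded Ω) (hΩne : Ω.Nonempty) :
    ∃ C : ℝ, 0 < C ∧ ∀ u : Euc d → ℝ, IsTest u →
      (∫ x, (u x ^ 2 + ‖gradient u x‖ ^ 2)) ≤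
        C * ((∫ x, ‖gradient u x‖ ^ 2) + ∫ x in Ωᶜ, u x ^ 2) := by
  obtain ⟨R, hR, hΩR⟩ := hΩb.subset_closedBall_lt 0 0
  -- cutoff function
  let φ : ContDiffBump (0 : Euc d) := ⟨R+1, R+2, by positivity, by linarith⟩
  set χ : Euc d → ℝ := ⇑φ with hχ
  have hχsm : ContDiff ℝ (⊤:ℕ∞) χ := φ.contDiff
  have hχcs : HasCompactSupport χ := φ.hasCompactSupport
  have hχone : ∀ x ∈ Ω, χ x = 1 := fun x hx =>
    φ.one_of_mem_closedBall
      (closedBall_subset_closedBall (show (R:ℝ) ≤ R+1 by linarith) (hΩR hx))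
  have hDχcont : Continuous (fderiv ℝ χ) := hχsm.continuous_fderiv (by simp)
  have hDχcs : HasCompactSupport (fderiv ℝ χ) := hχcs.fderiv (𝕜 := ℝ)
  -- fderiv χ vanishes on Ω
  have hDχΩ : ∀ x ∈ Ω, fderiv ℝ χ x = 0 := by
    intro x hx
    have hx1 : ‖x‖ ≤ R := by simpa using mem_closedBall_iff_norm.1 (hΩR hx)
    have hmem : x ∈ ball (0 : Euc d) (R+1) := by
      rw [mem_ball_iff_norm]; simpa using lt_of_le_of_lt hx1 (by linarith)
    have heq : χ =ᶠ[nhds x] (fun _ => 1) := by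
      filter_upwards [(isOpen_ball).mem_nhds hmem] with y hy
      exact φ.one_of_mem_closedBall (ball_subset_closedBall hy)
    rw [heq.fderiv_eq, fderiv_fun_const]; rfl
  -- bound on ‖fderiv χ‖
  obtain ⟨M₀, hM₀⟩ := (hDχcont.norm).bounded_above_of_compact_support hDχcs.norm
  set M : ℝ := max M₀ 0 with hM
  have hMnn : 0 ≤ M := le_max_right _ _
  have hMb : ∀ x, ‖fderiv ℝ χ x‖ ≤ M := by
    intro x
    have h := hM₀ x
    rw [norm_norm] at h
    exact le_trans h (le_max_left _ _)
  set L : ℝ := 2*(R+2)+1 with hLdef2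
  have hLpos : 0 < L := by rw [hLdef2]; linarith
  set C : ℝ := 2*L^2 + 2*L^2*M^2 + 1 with hC
  refine ⟨C, by positivity, ?_⟩
  rintro u ⟨husm, hucs⟩
  have hucont : Continuous u := husm.continuous
  have hDucont : Continuous (fderiv ℝ u) := husm.continuous_fderiv (by simp)
  have hDucs : HasCompactSupport (fderiv ℝ u) := hucs.fderiv (𝕜 := ℝ)
  have hc1 : HasCompactSupport (fun x : Euc d => u x ^ 2) := by
    have := hucs.comp_left (g := fun y : ℝ => y ^ 2) (by simp)
    exact this
  have hu2int : Integrable (fun x : Euc d => u x ^ 2) :=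
    (hucont.pow 2).integrable_of_hasCompactSupport hc1
  have hc2 : HasCompactSupport (fun x : Euc d => ‖fderiv ℝ u x‖ ^ 2) := by
    have := hDucs.comp_left (g := fun y : (Euc d →L[ℝ] ℝ) => ‖y‖ ^ 2) (by simp)
    exact this
  have hDu2int : Integrable (fun x : Euc d => ‖fderiv ℝ u x‖ ^ 2) :=
    (hDucont.norm.pow 2).integrable_of_hasCompactSupport hc2
  -- gradient norm = fderiv norm
  have hgrad : ∀ x, ‖gradient u x‖ = ‖fderiv ℝ u x‖ := fun x => by
    rw [gradient]; exact LinearIsometryEquiv.norm_map _ _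
  set G : ℝ := ∫ x, ‖fderiv ℝ u x‖ ^ 2 with hGdef
  set K : ℝ := ∫ x in Ωᶜ, u x ^ 2 with hKdef
  have hGnn : 0 ≤ G := integral_nonneg fun x => by positivity
  have hKnn : 0 ≤ K := setIntegral_nonneg hΩo.measurableSet.compl fun x _ => sq_nonneg _
  -- the product χ * u
  set w : Euc d → ℝ := fun x => χ x * u x with hw
  have hwsm : ContDiff ℝ (⊤:ℕ∞) w := hχsm.mul husm
  have hwsupp : tsupport w ⊆ closedBall 0 (R+2) := by
    have h1 : tsupport w ⊆ tsupport χ :=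
      closure_mono (Function.support_mul_subset_left _ _)
    rwa [φ.tsupport_eq] at h1
  have hwcs : HasCompactSupport w :=
    IsCompact.of_isClosed_subset (isCompact_closedBall _ _) (isClosed_tsupport w) hwsupp
  have hc3 : HasCompactSupport (fun x : Euc d => w x ^ 2) := by
    have := hwcs.comp_left (g := fun y : ℝ => y ^ 2) (by simp)
    exact this
  have hw2int : Integrable (fun x : Euc d => w x ^ 2) :=
    ((hwsm.continuous).pow 2).integrable_of_hasCompactSupport hc3
  have hDwcont : Continuous (fderiv ℝ w) := hwsm.continuous_fderiv (by simp)
  have hDwcs : HasCompactSupport (fderiv ℝ w) := hwcs.fderiv (𝕜 := ℝ)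
  have hc4 : HasCompactSupport (fun x : Euc d => ‖fderiv ℝ w x‖ ^ 2) := by
    have := hDwcs.comp_left (g := fun y : (Euc d →L[ℝ] ℝ) => ‖y‖ ^ 2) (by simp)
    exact this
  have hDw2int : Integrable (fun x : Euc d => ‖fderiv ℝ w x‖ ^ 2) :=
    (hDwcont.norm.pow 2).integrable_of_hasCompactSupport hc4
  -- derivative of the product
  have hDw : ∀ x, fderiv ℝ w x = χ x • fderiv ℝ u x + u x • fderiv ℝ χ x := fun x =>
    fderiv_mul (hχsm.differentiable (by simp) x)
      (husm.differentiable (by simp) x)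
  -- pointwise bound for ‖fderiv w‖²
  have hptw : ∀ x, ‖fderiv ℝ w x‖ ^ 2 ≤
      2*‖fderiv ℝ u x‖^2 + 2*M^2 * (Ωᶜ.indicator (fun y => u y ^ 2) x) := by
    intro x
    by_cases hx : x ∈ Ω
    · have hwu : fderiv ℝ w x = fderiv ℝ u x := by
        rw [hDw x, hDχΩ x hx, hχone x hx, smul_zero, add_zero, one_smul]
      rw [hwu]
      have hind : Ωᶜ.indicator (fun y => u y ^ 2) x = 0 :=
        indicator_of_notMem (by simpa using hx) _
      rw [hind]
      nlinarith [sq_nonneg (‖fderiv ℝ u x‖)]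
    · have hind : Ωᶜ.indicator (fun y => u y ^ 2) x = u x ^ 2 :=
        indicator_of_mem (by simpa using hx) _
      rw [hind]
      have h1 : ‖fderiv ℝ w x‖ ≤ ‖fderiv ℝ u x‖ + M * |u x| := by
        rw [hDw x]
        refine le_trans (norm_add_le _ _) ?_
        have e1 : ‖χ x • fderiv ℝ u x‖ ≤ ‖fderiv ℝ u x‖ := by
          rw [norm_smul, Real.norm_eq_abs, abs_of_nonneg φ.nonneg]
          exact mul_le_of_le_one_left (norm_nonneg _) φ.le_one
        have e2 : ‖u x • fderiv ℝ χ x‖ ≤ M * |u x| := by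
          rw [norm_smul, Real.norm_eq_abs, mul_comm]
          exact mul_le_mul_of_nonneg_right (hMb x) (abs_nonneg _)
        linarith
      have h2 : ‖fderiv ℝ w x‖^2 ≤ (‖fderiv ℝ u x‖ + M * |u x|)^2 :=
        pow_le_pow_left₀ (norm_nonneg _) h1 2
      have h3 : (M * |u x|)^2 = M^2 * u x ^2 := by
        rw [mul_pow, sq_abs]
      nlinarith [sq_nonneg (‖fderiv ℝ u x‖ - M * |u x|)]
  -- integrate the pointwise bound
  have hindint : Integrable (fun x : Euc d => Ωᶜ.indicator (fun y => u y ^ 2) x) :=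
    hu2int.indicator hΩo.measurableSet.compl
  have hrhsint : Integrable (fun x : Euc d =>
      2*‖fderiv ℝ u x‖^2 + 2*M^2 * (Ωᶜ.indicator (fun y => u y ^ 2) x)) :=
    (hDu2int.const_mul 2).add (hindint.const_mul (2*M^2))
  have hDwbound : ∫ x, ‖fderiv ℝ w x‖ ^ 2 ≤ 2*G + 2*M^2*K := by
    calc ∫ x, ‖fderiv ℝ w x‖ ^ 2
        ≤ ∫ x, (2*‖fderiv ℝ u x‖^2 + 2*M^2 * (Ωᶜ.indicator (fun y => u y ^ 2) x)) :=
          integral_mono hDw2int hrhsint hptw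
      _ = 2*G + 2*M^2*K := by
          rw [integral_add (hDu2int.const_mul 2) (hindint.const_mul (2*M^2)),
            integral_const_mul, integral_const_mul,
            integral_indicator hΩo.measurableSet.compl]
  -- Poincaré for w
  have hp : ∫ x, w x ^ 2 ≤ L^2 * ∫ x, ‖fderiv ℝ w x‖ ^ 2 := by
    have := poincare_ball hd (show (0:ℝ) < R+2 by linarith) hwsm hwsupp
    simpa [hLdef2] using this
  -- control of ∫_Ω u²
  have hΩu : ∫ x in Ω, u x ^ 2 ≤ L^2 * (2*G + 2*M^2*K) := by
    have e0 : ∫ x in Ω, u x ^ 2 = ∫ x in Ω, w x ^ 2 := by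
      refine setIntegral_congr_fun hΩo.measurableSet fun x hx => ?_
      simp [hw, hχone x hx]
    calc ∫ x in Ω, u x ^ 2 = ∫ x in Ω, w x ^ 2 := e0
      _ ≤ ∫ x, w x ^ 2 :=
          setIntegral_le_integral hw2int (Filter.Eventually.of_forall fun x => sq_nonneg _)
      _ ≤ L^2 * ∫ x, ‖fderiv ℝ w x‖ ^ 2 := hp
      _ ≤ L^2 * (2*G + 2*M^2*K) := by
          apply mul_le_mul_of_nonneg_left hDwbound (by positivity)
  -- assemble
  have hsplitu : ∫ x, u x ^ 2 = (∫ x in Ω, u x ^ 2) + K :=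
    (integral_add_compl hΩo.measurableSet hu2int).symm
  have hgradint : ∫ x, ‖gradient u x‖ ^ 2 = G := by
    refine integral_congr_ae (Filter.Eventually.of_forall fun x => ?_)
    simp only [hgrad x]
  have hLHS : (∫ x, (u x ^ 2 + ‖gradient u x‖ ^ 2)) = (∫ x, u x ^ 2) + G := by
    rw [integral_add hu2int]
    · rw [hgradint]
    · have : Integrable (fun x : Euc d => ‖gradient u x‖ ^ 2) := by
        apply hDu2int.congr
        exact Filter.Eventually.of_forall fun x => by simp only [hgrad x]
      exact this
  rw [hLHS, hgradint, hsplitu]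
  have hL2nn : 0 ≤ L^2 := sq_nonneg L
  have t1 : 0 ≤ L^2*M^2*G := by positivity
  have t2 : 0 ≤ L^2*K := by positivity
  nlinarith [hΩu, t1, t2, hC, hGnn, hKnn]
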